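/- For every finite connected graph G and every start vertex s, the hyperbolicity δ(G) of G is at most the cluster-diameter Δ_s(G) of the layering partition of G with respect to s. -/

import Mathlib

/-- The hyperbolicity (S3 - S2)/2 of a quadruple of vertices of a graph, where
S1 ≤ S2 ≤ S3 are the distance sums d(a,b)+d(c,d), d(a,c)+d(b,d), d(a,d)+d(b,c)
sorted nondecreasingly (S3 - S2 = 2·max + min - (S1+S2+S3)). -/
noncomputable def graphDelta4 {V : Type*} (G : SimpleGraph V) (a b c d : V) : ℝ :=
  let A : ℝ := (G.dist a b : ℝ) + (G.dist c d : ℝ)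
  let B : ℝ := (G.dist a c : ℝ) + (G.dist b d : ℝ)
  let C : ℝ := (G.dist a d : ℝ) + (G.dist b c : ℝ)
  (2 * max A (max B C) + min A (min B C) - (A + B + C)) / 2
/-- Two vertices are in the same cluster of the layering partition `LP(G,s)` iff they
are in the same layer (same distance from `s`) and are joined by a walk all of whose
vertices are at distance at least that layer index from `s`. -/
def SameCluster {V : Type*} (G : SimpleGraph V) (s u v : V) : Prop :=
  G.dist s u = G.dist s v ∧
    ∃ p : G.Walk u v, ∀ w ∈ p.support, G.dist s u ≤ G.dist s w

/-- The cluster-diameter `Δ_s(G)`: the largest diameter (in `d_G`) of a cluster of the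
layering partition `LP(G,s)`. -/
noncomputable def clusterDiameter {V : Type*} (G : SimpleGraph V) (s : V) : ℕ :=
  sSup {n : ℕ | ∃ u v, SameCluster G s u v ∧ G.dist u v = n}

/-- The cluster-radius `R_s(G)`: the smallest `r` such that every cluster of the
layering partition `LP(G,s)` is contained in some ball of radius `r` of `G`. -/
noncomputable def clusterRadius {V : Type*} (G : SimpleGraph V) (s : V) : ℕ :=
  sInf {r : ℕ | ∀ u, ∃ c, ∀ v, SameCluster G s u v → G.dist c v ≤ r}


section LayeringAux

open SimpleGraph

variable {V : Type*} [Fintype V] {G : SimpleGraph V}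

/-- The set of levels `j` such that `u` and `v` are joined by a walk staying at
distance `≥ j` from `s`, with `j` below both levels. -/
def meetSet (G : SimpleGraph V) (s u v : V) : Set ℕ :=
  {j | j ≤ G.dist s u ∧ j ≤ G.dist s v ∧
    ∃ p : G.Walk u v, ∀ z ∈ p.support, j ≤ G.dist s z}

noncomputable def meet (G : SimpleGraph V) (s u v : V) : ℕ :=
  sSup (meetSet G s u v)

lemma meetSet_bddAbove (s u v : V) : BddAbove (meetSet G s u v) :=
  ⟨G.dist s u, fun _ hj => hj.1⟩

lemma meetSet_nonempty (hG : G.Connected) (s u v : V) : (meetSet G s u v).Nonempty :=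
  ⟨0, Nat.zero_le _, Nat.zero_le _, (hG u v).some, fun _ _ => Nat.zero_le _⟩

lemma meet_mem (hG : G.Connected) (s u v : V) : meet G s u v ∈ meetSet G s u v :=
  Nat.sSup_mem (meetSet_nonempty hG s u v) (meetSet_bddAbove s u v)

lemma le_meet {s u v : V} {j : ℕ} (hj : j ∈ meetSet G s u v) : j ≤ meet G s u v :=
  le_csSup (meetSet_bddAbove s u v) hj

lemma meetSet_mono {s u v : V} {j j' : ℕ} (h : j' ≤ j) (hj : j ∈ meetSet G s u v) :
    j' ∈ meetSet G s u v := by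
  obtain ⟨h1, h2, p, hp⟩ := hj
  exact ⟨h.trans h1, h.trans h2, p, fun z hz => h.trans (hp z hz)⟩

lemma meetSet_comm_subset (s a b : V) : meetSet G s a b ⊆ meetSet G s b a := by
  rintro j ⟨h1, h2, p, hp⟩
  exact ⟨h2, h1, p.reverse, fun z hz => hp z (by
    rwa [Walk.support_reverse, List.mem_reverse] at hz)⟩

lemma meet_comm (s u v : V) : meet G s u v = meet G s v u := by
  unfold meet
  rw [le_antisymm (meetSet_comm_subset s u v) (meetSet_comm_subset s v u)]

lemma meet_ultra (hG : G.Connected) (s u y v : V) :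
    min (meet G s u y) (meet G s y v) ≤ meet G s u v := by
  obtain ⟨h1, h2, p, hp⟩ := meetSet_mono (min_le_left _ _) (meet_mem hG s u y)
  obtain ⟨h3, h4, q, hq⟩ := meetSet_mono (min_le_right _ _) (meet_mem hG s y v)
  refine le_meet ⟨h1, h4, p.append q, fun z hz => ?_⟩
  rcases (Walk.mem_support_append_iff p q).mp hz with h | h
  · exact hp z h
  · exact hq z h

set_option linter.unusedSectionVars false

lemma claimB (hG : G.Connected) (s u v : V) :
    G.dist s u + G.dist s v ≤ G.dist u v + 2 * meet G s u v := by
  classical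
  obtain ⟨p, hp⟩ := hG.exists_walk_length_eq_dist u v
  obtain ⟨z, hz, hzmin⟩ := p.support.toFinset.exists_min_image (G.dist s)
    ⟨u, by simp [p.start_mem_support]⟩
  rw [List.mem_toFinset] at hz
  have hzmin' : ∀ y ∈ p.support, G.dist s z ≤ G.dist s y := fun y hy =>
    hzmin y (List.mem_toFinset.mpr hy)
  have hjm : G.dist s z ≤ meet G s u v :=
    le_meet ⟨hzmin' u p.start_mem_support, hzmin' v p.end_mem_support, p, hzmin'⟩
  have hsplit : G.dist u z + G.dist z v ≤ G.dist u v := by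
    have hspec := p.take_spec hz
    have h1 : G.dist u z ≤ (p.takeUntil z hz).length := SimpleGraph.dist_le _
    have h2 : G.dist z v ≤ (p.dropUntil z hz).length := SimpleGraph.dist_le _
    have h3 : (p.takeUntil z hz).length + (p.dropUntil z hz).length = p.length := by
      rw [← Walk.length_append, hspec]
    omega
  have t1 : G.dist s u ≤ G.dist s z + G.dist z u := hG.dist_triangle
  have t2 : G.dist s v ≤ G.dist s z + G.dist z v := hG.dist_triangle
  have c1 : G.dist z u = G.dist u z := SimpleGraph.dist_comm ..
  omega

lemma descend (hG : G.Connected) (s : V) (j : ℕ) :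
    ∀ (k : ℕ) (u : V), G.dist s u = j + k →
    ∃ u', G.dist s u' = j ∧ G.dist u u' + j ≤ G.dist s u ∧
      ∃ q : G.Walk u' u, ∀ z ∈ q.support, j ≤ G.dist s z := by
  intro k
  induction k with
  | zero =>
    intro u hu
    exact ⟨u, by omega, by simp [SimpleGraph.dist_self]; omega, Walk.nil,
      fun z hz => by simp at hz; subst hz; omega⟩
  | succ k ih =>
    intro u hu
    obtain ⟨p, hp⟩ := hG.exists_walk_length_eq_dist u s
    have hus : G.dist u s = j + k + 1 := by rw [SimpleGraph.dist_comm]; omega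
    cases p with
    | nil => simp only [Walk.length_nil] at hp; omega
    | cons h q =>
      rename_i b
      have hb1 : G.dist b s ≤ q.length := SimpleGraph.dist_le q
      have hb2 : G.dist s b ≤ j + k := by
        rw [SimpleGraph.dist_comm]
        simp only [Walk.length_cons] at hp
        omega
      have hbu : G.dist b u = 1 := SimpleGraph.dist_eq_one_iff_adj.mpr h.symm
      have hb3 : G.dist s u ≤ G.dist s b + G.dist b u := hG.dist_triangle
      have hb : G.dist s b = j + k := by omega
      obtain ⟨u', hu'1, hu'2, q', hq'⟩ := ih b hb
      refine ⟨u', hu'1, ?_, q'.concat h.symm, ?_⟩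
      · have : G.dist u u' ≤ G.dist u b + G.dist b u' := hG.dist_triangle
        have h1 : G.dist u b = 1 := SimpleGraph.dist_eq_one_iff_adj.mpr h
        have h2 : G.dist b u' = G.dist u' b := SimpleGraph.dist_comm ..
        omega
      · intro z hz
        rw [Walk.support_concat, List.mem_append] at hz
        rcases hz with hz | hz
        · exact hq' z hz
        · simp at hz; subst hz; omega

lemma clusterDiameter_bddAbove (G : SimpleGraph V) (s : V) :
    BddAbove {n : ℕ | ∃ u v, SameCluster G s u v ∧ G.dist u v = n} := by
  apply Set.Finite.bddAbove
  apply Set.Finite.subset (Set.finite_range fun p : V × V => G.dist p.1 p.2)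
  rintro n ⟨u, v, -, h⟩
  exact ⟨(u, v), h⟩

lemma claimC (hG : G.Connected) (s u v : V) :
    G.dist u v + 2 * meet G s u v ≤ G.dist s u + G.dist s v + clusterDiameter G s := by
  obtain ⟨h1, h2, p, hp⟩ := meet_mem hG s u v
  set j := meet G s u v with hj
  obtain ⟨u', hu'1, hu'2, qu, hqu⟩ := descend hG s j (G.dist s u - j) u (by omega)
  obtain ⟨v', hv'1, hv'2, qv, hqv⟩ := descend hG s j (G.dist s v - j) v (by omega)
  have hsc : SameCluster G s u' v' := by
    refine ⟨by omega, qu.append (p.append qv.reverse), fun z hz => ?_⟩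
    rw [hu'1]
    rcases (Walk.mem_support_append_iff _ _).mp hz with hz | hz
    · exact hqu z hz
    rcases (Walk.mem_support_append_iff _ _).mp hz with hz | hz
    · exact hp z hz
    · exact hqv z (by rwa [Walk.support_reverse, List.mem_reverse] at hz)
  have hdle : G.dist u' v' ≤ clusterDiameter G s :=
    le_csSup (clusterDiameter_bddAbove G s) ⟨u', v', hsc, rfl⟩
  have t1 : G.dist u v ≤ G.dist u u' + G.dist u' v := hG.dist_triangle
  have t2 : G.dist u' v ≤ G.dist u' v' + G.dist v' v := hG.dist_triangle
  have c1 : G.dist v' v = G.dist v v' := SimpleGraph.dist_comm ..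
  omega

lemma cast_final {A B C D : ℕ}
    (h : 2 * max A (max B C) + min A (min B C) ≤ A + B + C + 2 * D) :
    ((2 * max (A : ℝ) (max (B : ℝ) (C : ℝ)) + min (A : ℝ) (min (B : ℝ) (C : ℝ)) -
      ((A : ℝ) + (B : ℝ) + (C : ℝ))) / 2) ≤ (D : ℝ) := by
  have h' : ((2 * max A (max B C) + min A (min B C) : ℕ) : ℝ) ≤
      ((A + B + C + 2 * D : ℕ) : ℝ) := Nat.cast_le.mpr h
  push_cast at h'
  linarith

end LayeringAux

/-- For every finite connected graph `G` and start vertex `s`, the hyperbolicity of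
any quadruple of vertices (hence the hyperbolicity `δ(G)`) is at most the
cluster-diameter `Δ_s(G)` of the layering partition of `G` with respect to `s`. -/
theorem hyperbolicity_le_clusterDiameter {V : Type*} [Fintype V]
    (G : SimpleGraph V) (hG : G.Connected) (s : V) :
    ∀ u v w x : V, graphDelta4 G u v w x ≤ (clusterDiameter G s : ℝ) := by
  intro u v w x
  -- ultrametric four-point inequalities for the meet levels
  have U : ∀ a y b : V, min (meet G s a y) (meet G s y b) ≤ meet G s a b :=
    fun a y b => meet_ultra hG s a y b
  have c1 := meet_comm (G := G) s v u
  have c2 := meet_comm (G := G) s w u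
  have c3 := meet_comm (G := G) s x u
  have c4 := meet_comm (G := G) s w v
  have c5 := meet_comm (G := G) s x v
  have c6 := meet_comm (G := G) s x w
  have hS1 : min (meet G s u w + meet G s v x) (meet G s u x + meet G s v w)
      ≤ meet G s u v + meet G s w x := by
    have i1 := U u w v; have i2 := U u x v; have i3 := U w u x; have i4 := U w v x
    have i5 := U u v w; have i6 := U u x w; have i7 := U v u x; have i8 := U v w x
    have i9 := U u v x; have i10 := U u w x; have i11 := U v u w; have i12 := U v x w
    omega
  have hS2 : min (meet G s u v + meet G s w x) (meet G s u x + meet G s v w)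
      ≤ meet G s u w + meet G s v x := by
    have i1 := U u w v; have i2 := U u x v; have i3 := U w u x; have i4 := U w v x
    have i5 := U u v w; have i6 := U u x w; have i7 := U v u x; have i8 := U v w x
    have i9 := U u v x; have i10 := U u w x; have i11 := U v u w; have i12 := U v x w
    omega
  have hS3 : min (meet G s u v + meet G s w x) (meet G s u w + meet G s v x)
      ≤ meet G s u x + meet G s v w := by
    have i1 := U u w v; have i2 := U u x v; have i3 := U w u x; have i4 := U w v x
    have i5 := U u v w; have i6 := U u x w; have i7 := U v u x; have i8 := U v w x
    have i9 := U u v x; have i10 := U u w x; have i11 := U v u w; have i12 := U v x w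
    omega
  have hB1 := claimB hG s u v; have hC1 := claimC hG s u v
  have hB2 := claimB hG s u w; have hC2 := claimC hG s u w
  have hB3 := claimB hG s u x; have hC3 := claimC hG s u x
  have hB4 := claimB hG s v w; have hC4 := claimC hG s v w
  have hB5 := claimB hG s v x; have hC5 := claimC hG s v x
  have hB6 := claimB hG s w x; have hC6 := claimC hG s w x
  have key : 2 * max (G.dist u v + G.dist w x)
        (max (G.dist u w + G.dist v x) (G.dist u x + G.dist v w)) +
      min (G.dist u v + G.dist w x)
        (min (G.dist u w + G.dist v x) (G.dist u x + G.dist v w)) ≤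
      (G.dist u v + G.dist w x) + (G.dist u w + G.dist v x) +
        (G.dist u x + G.dist v w) + 2 * clusterDiameter G s := by
    omega
  simp only [graphDelta4]
  have := cast_final key
  push_cast at this ⊢
  convert this using 3 <;> push_cast <;> ring
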